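/- Let (X,d) be a metric space, let S be a finite subset of X, let T be a tour of S (a Hamiltonian cycle on S, with weight w(T) equal to the sum of distances of consecutive points), and let C ⊆ S. Suppose T crosses C exactly r times, where an edge of T crosses C if exactly one of its endpoints lies in C, and let P ⊆ C be the set of endpoints in C of the crossing edges. Then there exists a tour T′ of S that crosses C at most twice and satisfies w(T′) ≤ w(T) + 4 · w(MST(P)). -/

import Mathlib

open Metric

/-- The total weight of a graph on the points of a finite set `P` in a metric space:
the sum over its edges `{u,v}` of `dist u v`. -/
noncomputable def graphWeight {X : Type*} [MetricSpace X] (P : Finset X)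
    (T : SimpleGraph {x // x ∈ P}) : ℝ :=
  ∑ e ∈ T.edgeSet.toFinite.toFinset,
    Sym2.lift ⟨fun (a b : {x // x ∈ P}) => dist (a : X) (b : X), fun _ _ => dist_comm _ _⟩ e

/-- `mstWeight P` is the minimum total edge weight of a spanning tree on the finite point
set `P` (by convention it is `0` when `|P| ≤ 1`, via `Real.sInf` of the empty set for `P = ∅`). -/
noncomputable def mstWeight {X : Type*} [MetricSpace X] (P : Finset X) : ℝ :=
  sInf {w : ℝ | ∃ T : SimpleGraph {x // x ∈ P}, T.Connected ∧ T.IsAcyclic ∧ w = graphWeight P T}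

/-- A tour of a finite set `S` is a Hamiltonian cycle on `S`, encoded as an injective map
`f : ZMod n → X` whose range is exactly `S`; consecutive points `f i`, `f (i+1)` are the
edges of the cycle. -/
def IsTour {X : Type*} [MetricSpace X] (S : Finset X) {n : ℕ} (f : ZMod n → X) : Prop :=
  Function.Injective f ∧ ∀ x : X, x ∈ S ↔ ∃ i, f i = x

/-- The weight of a tour: the sum of distances between consecutive points. -/
noncomputable def tourWeight {X : Type*} [MetricSpace X] {n : ℕ} [NeZero n]
    (f : ZMod n → X) : ℝ :=
  ∑ i : ZMod n, dist (f i) (f (i + 1))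


open Finset

namespace Patch

variable {n : ℕ} [NeZero n]

lemma val_inj' {k j : ZMod n} (h : k.val = j.val) : k = j := by
  rw [← ZMod.natCast_zmod_val k, h, ZMod.natCast_zmod_val]

lemma sub_val' {j k : ZMod n} (h : k.val ≤ j.val) : (j - k).val = j.val - k.val := by
  have h1 : ((j.val - k.val : ℕ) : ZMod n) = j - k := by
    push_cast [Nat.cast_sub h, ZMod.natCast_zmod_val]; rfl
  rw [← h1, ZMod.val_cast_of_lt (lt_of_le_of_lt (Nat.sub_le _ _) (ZMod.val_lt j))]

lemma neg_one_val' : (-1 : ZMod n).val = n - 1 := by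
  have h1 : ((n - 1 : ℕ) : ZMod n) = -1 := by
    have h0 : ((n : ℕ) : ZMod n) = 0 := ZMod.natCast_self n
    push_cast [Nat.cast_sub (Nat.one_le_iff_ne_zero.2 (NeZero.ne n))]
    rw [h0]; ring
  rw [← h1, ZMod.val_cast_of_lt (by have := Nat.pos_of_ne_zero (NeZero.ne n); omega)]

lemma val_add_one_of_ne {k : ZMod n} (h : k ≠ -1) : (k + 1).val = k.val + 1 := by
  have h2 := ZMod.val_lt k
  have h3 : k.val + 1 < n := by
    rcases Nat.lt_or_ge (k.val+1) n with h3 | h3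
    · exact h3
    · exact absurd (val_inj' (by rw [neg_one_val']; omega)) h
  have h1 : (1 : ZMod n).val = 1 := by
    rw [ZMod.val_one_eq_one_mod]; exact Nat.mod_eq_of_lt (by omega)
  rw [ZMod.val_add_of_lt (by omega), h1]

lemma ne_neg_one_of_val_lt {k : ZMod n} (h : k.val + 1 < n) : k ≠ -1 := by
  intro he; rw [he, neg_one_val'] at h; omega

end Patch

open scoped Classical

namespace Patch

variable {X : Type*} [MetricSpace X]

/-- The weight of a tour (local copy). -/
noncomputable def tw {n : ℕ} [NeZero n] (f : ZMod n → X) : ℝ :=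
  ∑ i : ZMod n, dist (f i) (f (i + 1))

noncomputable def crossF (C : Finset X) {n : ℕ} [NeZero n] (f : ZMod n → X) :
    Finset (ZMod n) :=
  Finset.univ.filter (fun i => Xor' (f i ∈ C) (f (i+1) ∈ C))

lemma mem_crossF {C : Finset X} {n : ℕ} [NeZero n] {f : ZMod n → X} {i : ZMod n} :
    i ∈ crossF C f ↔ Xor' (f i ∈ C) (f (i+1) ∈ C) := by
  simp [crossF]

noncomputable def cp (C : Finset X) {n : ℕ} [NeZero n] (f : ZMod n → X) (i : ZMod n) : X :=
  if f i ∈ C then f i else f (i+1)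

noncomputable def sig (C : Finset X) {n : ℕ} [NeZero n] (f : ZMod n → X) (ψ : X → X) : ℝ :=
  ∑ i ∈ crossF C f, dist (cp C f i) (ψ (cp C f i))

lemma sig_nonneg (C : Finset X) {n : ℕ} [NeZero n] (f : ZMod n → X) (ψ : X → X) :
    0 ≤ sig C f ψ :=
  Finset.sum_nonneg (fun _ _ => dist_nonneg)

lemma cp_mem_of_cross {C : Finset X} {n : ℕ} [NeZero n] {f : ZMod n → X} {i : ZMod n}
    (h : i ∈ crossF C f) : cp C f i ∈ C ∧ (f i = cp C f i ∨ f (i+1) = cp C f i) := by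
  rw [mem_crossF] at h
  rcases h with ⟨h1, h2⟩ | ⟨h1, h2⟩
  · exact ⟨by simp [cp, h1], Or.inl (by simp [cp, h1])⟩
  · exact ⟨by simp [cp, h1, h2], Or.inr (by simp [cp, h2])⟩

/-- The normalized 2-opt move. -/
lemma twoOpt_norm (C : Finset X) {n : ℕ} [NeZero n] (f : ZMod n → X) (j : ZMod n)
    (hj : j ≠ -1)
    (hc1 : Xor' (f (-1) ∈ C) (f 0 ∈ C))
    (hcj : Xor' (f j ∈ C) (f (j+1) ∈ C))
    (hQ : f (-1) ∈ C ↔ f j ∈ C) :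
    ∃ e : Equiv.Perm (ZMod n),
      tw (f ∘ e) ≤ tw f + 2 * dist (cp C f (-1)) (cp C f j) ∧
      (crossF C (f ∘ e)).card + 2 = (crossF C f).card ∧
      (∀ ψ : X → X, sig C (f ∘ e) ψ + dist (cp C f (-1)) (ψ (cp C f (-1)))
          + dist (cp C f j) (ψ (cp C f j)) ≤ sig C f ψ) ∧
      (∀ k ∈ crossF C (f ∘ e), ∃ k' ∈ crossF C f, cp C (f ∘ e) k = cp C f k') := by
  classical
  -- basic numerology
  set L := j.val with hLdef
  have hL : L < n := ZMod.val_lt j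
  have hneg1 : (-1 : ZMod n).val = n - 1 := neg_one_val'
  have hLne : L ≠ n - 1 := by
    intro h; exact hj (val_inj' (by rw [hneg1, ← h]))
  have hn0 : 0 < n := Nat.pos_of_ne_zero (NeZero.ne n)
  have hL1 : L + 1 < n := by omega
  -- the reversal permutation
  set ρ : ZMod n → ZMod n := fun k => if k.val ≤ L then j - k else k with hρdef
  have hρval : ∀ k : ZMod n, k.val ≤ L → (j - k).val = L - k.val := fun k hk => sub_val' hk
  have hρinv : Function.Involutive ρ := by
    intro k
    by_cases hk : k.val ≤ L
    · have h1 : (j - k).val = L - k.val := hρval k hk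
      have h2 : (j - k).val ≤ L := by omega
      simp only [hρdef]
      rw [if_pos hk, if_pos h2]
      ring
    · simp only [hρdef, if_neg hk]
  set e : Equiv.Perm (ZMod n) := hρinv.toPerm with hedef
  have he : ∀ k, e k = ρ k := fun k => rfl
  -- the index bijection for non-special indices
  set σ : ZMod n → ZMod n := fun k => if k.val < L then j - (k + 1) else k with hσdef
  -- evaluation facts
  have hval0 : (0 : ZMod n).val = 0 := ZMod.val_zero
  have hρ_neg1 : ρ (-1) = -1 := by
    simp only [hρdef]; rw [if_neg (by omega : ¬ (-1 : ZMod n).val ≤ L)]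
  have hρ_0 : ρ 0 = j := by
    simp only [hρdef]; rw [if_pos (by omega : (0 : ZMod n).val ≤ L)]; ring
  have hρ_j : ρ j = 0 := by
    simp only [hρdef]; rw [if_pos (le_refl L)]; ring
  have hvalj1 : (j + 1).val = L + 1 := val_add_one_of_ne hj
  have hρ_j1 : ρ (j + 1) = j + 1 := by
    simp only [hρdef]; rw [if_neg (by omega : ¬ (j+1).val ≤ L)]
  -- facts for generic indices
  have hval_succ : ∀ k : ZMod n, k.val < L → (k+1).val = k.val + 1 := by
    intro k hk
    exact val_add_one_of_ne (ne_neg_one_of_val_lt (by omega))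
  have hval_succ' : ∀ k : ZMod n, L < k.val → k ≠ -1 → (k+1).val = k.val + 1 := by
    intro k hk hk'
    exact val_add_one_of_ne hk'
  have hσval : ∀ k : ZMod n, k.val < L → (σ k).val = L - (k.val + 1) := by
    intro k hk
    simp only [hσdef, if_pos hk]
    rw [hρval (k+1) (by rw [hval_succ k hk]; omega), hval_succ k hk]
  -- σ maps non-special to non-special, involutively
  have hσ_inv : ∀ k : ZMod n, σ (σ k) = k := by
    intro k
    by_cases hk : k.val < L
    · have h1 : (σ k).val = L - (k.val + 1) := hσval k hk
      have h2 : (σ k).val < L := by omega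
      simp only [hσdef] at h1 h2 ⊢
      rw [if_pos hk] at h2 ⊢
      rw [if_pos h2]
      ring
    · simp only [hσdef]; rw [if_neg hk, if_neg hk]
  -- relation between ρ and σ on the reversed arc
  have hρσ : ∀ k : ZMod n, k.val < L → ρ k = σ k + 1 ∧ ρ (k + 1) = σ k := by
    intro k hk
    constructor
    · simp only [hρdef, hσdef]
      rw [if_pos (by omega : k.val ≤ L), if_pos hk]
      ring
    · simp only [hρdef, hσdef]
      rw [if_pos (by rw [hval_succ k hk]; omega : (k+1).val ≤ L), if_pos hk]
  have hρ_id : ∀ k : ZMod n, L < k.val → k ≠ -1 → ρ k = k ∧ ρ (k + 1) = k + 1 := by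
    intro k hk hk'
    constructor
    · simp only [hρdef]; rw [if_neg (by omega)]
    · simp only [hρdef]
      rw [if_neg (by rw [hval_succ' k hk hk']; omega)]
  -- the special set
  have h1j : (-1 : ZMod n) ≠ j := fun h => hj h.symm
  set A : Finset (ZMod n) := {-1, j} with hAdef
  have hAmem : ∀ k, k ∈ A ↔ k = -1 ∨ k = j := by
    intro k; simp [hAdef]
  have hkA : ∀ k : ZMod n, k ∉ A → (k.val < L ∨ (L < k.val ∧ k ≠ -1)) := by
    intro k hk
    rw [hAmem] at hk
    push_neg at hk
    rcases Nat.lt_trichotomy k.val L with h | h | h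
    · exact Or.inl h
    · exact absurd (val_inj' h) hk.2
    · exact Or.inr ⟨h, hk.1⟩
  have hσA : ∀ k : ZMod n, k ∉ A → σ k ∉ A := by
    intro k hk
    rcases hkA k hk with h | h
    · have h1 := hσval k h
      rw [hAmem]
      push_neg
      constructor
      · intro he; rw [he, hneg1] at h1; omega
      · intro he; rw [he] at h1; omega
    · simp only [hσdef]; rw [if_neg (by omega)]; exact hk
  -- sum decomposition helper
  have hsplit : ∀ g : ZMod n → ℝ, ∑ k : ZMod n, g k = (∑ k ∈ univ \ A, g k) + (g (-1) + g j) := by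
    intro g
    rw [← Finset.sum_pair h1j]
    exact (Finset.sum_sdiff (Finset.subset_univ A)).symm
  -- term equality on generic indices
  have hterm : ∀ k ∈ univ \ A, dist (f (ρ k)) (f (ρ (k+1))) = dist (f (σ k)) (f (σ k + 1)) := by
    intro k hk
    rcases hkA k (Finset.mem_sdiff.mp hk).2 with h | h
    · obtain ⟨e1, e2⟩ := hρσ k h
      rw [e1, e2, dist_comm]
    · obtain ⟨e1, e2⟩ := hρ_id k h.1 h.2
      simp only [hσdef]
      rw [e1, e2, if_neg (by omega)]
  have hσmaps : ∀ k ∈ univ \ A, σ k ∈ univ \ A := by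
    intro k hk
    exact Finset.mem_sdiff.mpr ⟨Finset.mem_univ _, (hσA k (Finset.mem_sdiff.mp hk).2)⟩
  -- weight computation
  have hwsum : tw (f ∘ e) = (∑ k ∈ univ \ A, dist (f k) (f (k+1)))
      + (dist (f (-1)) (f j) + dist (f 0) (f (j+1))) := by
    have h0 : tw (f ∘ e) = ∑ k : ZMod n, dist (f (ρ k)) (f (ρ (k+1))) := by
      unfold tw
      refine Finset.sum_congr rfl (fun k _ => ?_)
      simp [he]
    rw [h0, hsplit]
    congr 1
    · refine Finset.sum_nbij' σ σ hσmaps hσmaps (fun k hk => hσ_inv k) (fun k hk => hσ_inv k) ?_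
      intro k hk
      rw [hterm k hk]
    · rw [hρ_neg1, hρ_j, hρ_j1]
      have : (-1 : ZMod n) + 1 = 0 := by ring
      rw [this, hρ_0]
  have hwf : tw f = (∑ k ∈ univ \ A, dist (f k) (f (k+1)))
      + (dist (f (-1)) (f 0) + dist (f j) (f (j+1))) := by
    unfold tw
    rw [hsplit]
    congr 2
    rw [(by ring : (-1 : ZMod n) + 1 = 0)]
  -- key triangle inequality for the two new edges
  have hkey : dist (f (-1)) (f j) + dist (f 0) (f (j+1)) ≤
      dist (f (-1)) (f 0) + dist (f j) (f (j+1)) + 2 * dist (cp C f (-1)) (cp C f j) := by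
    have hne01 : (-1 : ZMod n) + 1 = 0 := by ring
    by_cases h : f (-1) ∈ C
    · have hjC : f j ∈ C := hQ.mp h
      have hcp1 : cp C f (-1) = f (-1) := by simp [cp, h]
      have hcpj : cp C f j = f j := by simp [cp, hjC]
      rw [hcp1, hcpj]
      have := dist_triangle4 (f 0) (f (-1)) (f j) (f (j+1))
      have h2 := dist_comm (f 0) (f (-1))
      have h3 := dist_comm (f 0) (f (j+1))
      linarith
    · have hjC : f j ∉ C := fun hc => h (hQ.mpr hc)
      have h0C : f 0 ∈ C := by
        rcases hc1 with ⟨h1, _⟩ | ⟨h1, _⟩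
        · exact absurd h1 h
        · exact h1
      have hcp1 : cp C f (-1) = f 0 := by simp [cp, h, hne01]
      have hj1C : f (j+1) ∈ C := by
        rcases hcj with ⟨h1, _⟩ | ⟨h1, _⟩
        · exact absurd h1 hjC
        · exact h1
      have hcpj : cp C f j = f (j+1) := by simp [cp, hjC]
      rw [hcp1, hcpj]
      have := dist_triangle4 (f (-1)) (f 0) (f (j+1)) (f j)
      have h2 := dist_comm (f (j+1)) (f j)
      linarith
  -- membership iff for the second complementary statement
  have hQ2 : f 0 ∈ C ↔ f (j+1) ∈ C := by
    rcases hc1 with ⟨a1, a2⟩ | ⟨a1, a2⟩ <;> rcases hcj with ⟨b1, b2⟩ | ⟨b1, b2⟩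
    · exact iff_of_false a2 b2
    · exact absurd (hQ.mp a1) b2
    · exact absurd (hQ.mpr b1) a2
    · exact iff_of_true a1 b1
  -- crossing characterization
  have hfe : ∀ k, (f ∘ e) k = f (ρ k) := fun k => rfl
  have hne01 : (-1 : ZMod n) + 1 = 0 := by ring
  have hcross : ∀ k : ZMod n, k ∈ crossF C (f ∘ e) ↔ (k ∉ A ∧ σ k ∈ crossF C f) := by
    intro k
    by_cases hk1 : k = -1
    · subst hk1
      simp only [mem_crossF, hfe, hne01, hρ_neg1, hρ_0]
      constructor
      · rintro (⟨a1, a2⟩ | ⟨a1, a2⟩)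
        · exact absurd (hQ.mp a1) a2
        · exact absurd (hQ.mpr a1) a2
      · rintro ⟨h1, _⟩
        exact absurd (Or.inl rfl) (fun hh => h1 ((hAmem _).mpr hh))
    · by_cases hk2 : k = j
      · subst hk2
        simp only [mem_crossF, hfe, hρ_j, hρ_j1]
        constructor
        · rintro (⟨a1, a2⟩ | ⟨a1, a2⟩)
          · exact absurd (hQ2.mp a1) a2
          · exact absurd (hQ2.mpr a1) a2
        · rintro ⟨h1, _⟩
          exact absurd (Or.inr rfl) (fun hh => h1 ((hAmem _).mpr hh))
      · have hkA' : k ∉ A := by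
          rw [hAmem]; push_neg; exact ⟨hk1, hk2⟩
        rcases hkA k hkA' with h | h
        · obtain ⟨e1, e2⟩ := hρσ k h
          simp only [mem_crossF, hfe, he, e1, e2]
          constructor
          · intro hx; exact ⟨hkA', hx.symm⟩
          · rintro ⟨-, hx⟩; exact hx.symm
        · obtain ⟨e1, e2⟩ := hρ_id k h.1 h.2
          have hσk : σ k = k := by simp only [hσdef]; rw [if_neg (by omega)]
          simp only [mem_crossF, hfe, he, e1, e2, hσk]
          exact ⟨fun hx => ⟨hkA', hx⟩, fun hx => hx.2⟩
  -- cp equality on generic crossing indices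
  have hcpeq : ∀ k : ZMod n, k ∉ A → σ k ∈ crossF C f → cp C (f ∘ e) k = cp C f (σ k) := by
    intro k hkA' hσk
    rcases hkA k hkA' with h | h
    · obtain ⟨e1, e2⟩ := hρσ k h
      rw [mem_crossF] at hσk
      rcases hσk with ⟨a1, a2⟩ | ⟨a1, a2⟩
      · simp [cp, he, e1, e2, a1, a2]
      · simp [cp, he, e1, e2, a1, a2]
    · obtain ⟨e1, e2⟩ := hρ_id k h.1 h.2
      have hσk' : σ k = k := by simp only [hσdef]; rw [if_neg (by omega)]
      simp [cp, he, e1, e2, hσk']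
  have hσinj : Function.Injective σ := Function.Involutive.injective hσ_inv
  -- the crossing set of the new tour
  have hA_sub : A ⊆ crossF C f := by
    intro k hk
    rcases (hAmem k).mp hk with rfl | rfl
    · rw [mem_crossF, hne01]; exact hc1
    · rw [mem_crossF]; exact hcj
  have hcrossSet : crossF C (f ∘ e) = (crossF C f \ A).image σ := by
    ext k
    rw [hcross]
    constructor
    · rintro ⟨h1, h2⟩
      refine Finset.mem_image.mpr ⟨σ k, Finset.mem_sdiff.mpr ⟨h2, hσA k h1⟩, hσ_inv k⟩
    · rintro hk
      obtain ⟨x, hx, rfl⟩ := Finset.mem_image.mp hk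
      obtain ⟨hx1, hx2⟩ := Finset.mem_sdiff.mp hx
      refine ⟨hσA x hx2, ?_⟩
      rw [hσ_inv x]; exact hx1
  have hcard2 : A.card = 2 := Finset.card_pair h1j
  have hcardA : 2 ≤ (crossF C f).card := by
    calc 2 = A.card := hcard2.symm
    _ ≤ _ := Finset.card_le_card hA_sub
  refine ⟨e, ?_, ?_, ?_, ?_⟩
  · rw [hwsum, hwf]; linarith
  · rw [hcrossSet, Finset.card_image_of_injective _ hσinj, Finset.card_sdiff_of_subset hA_sub, hcard2]
    omega
  · intro ψ
    have hsig : sig C (f ∘ e) ψ = ∑ k ∈ crossF C f \ A, dist (cp C f k) (ψ (cp C f k)) := by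
      unfold sig
      rw [hcrossSet, Finset.sum_image (fun x _ y _ h => hσinj h)]
      refine Finset.sum_congr rfl (fun k hk => ?_)
      obtain ⟨hk1, hk2⟩ := Finset.mem_sdiff.mp hk
      have h1 : σ k ∉ A := hσA k hk2
      have h2 : σ (σ k) ∈ crossF C f := by rw [hσ_inv]; exact hk1
      rw [hcpeq (σ k) h1 h2, hσ_inv]
    have hsplit2 : ∑ k ∈ crossF C f \ A, dist (cp C f k) (ψ (cp C f k))
        + (dist (cp C f (-1)) (ψ (cp C f (-1))) + dist (cp C f j) (ψ (cp C f j)))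
        = sig C f ψ := by
      unfold sig
      have h := Finset.sum_sdiff (f := fun k => dist (cp C f k) (ψ (cp C f k))) hA_sub
      rw [hAdef] at h
      rw [Finset.sum_pair h1j] at h
      rw [← h, hAdef]
    rw [hsig]
    linarith [hsplit2.ge]
  · intro k hk
    obtain ⟨h1, h2⟩ := (hcross k).mp hk
    exact ⟨σ k, h2, hcpeq k h1 h2⟩


section Rot

variable (C : Finset X) {n : ℕ} [NeZero n] (f : ZMod n → X) (t : ZMod n)

lemma mem_crossF_rot (k : ZMod n) :
    k ∈ crossF C (fun k => f (k + t)) ↔ (k + t) ∈ crossF C f := by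
  rw [mem_crossF, mem_crossF]
  have h : k + 1 + t = (k + t) + 1 := by ring
  rw [h]

lemma cp_rot (k : ZMod n) : cp C (fun k => f (k + t)) k = cp C f (k + t) := by
  unfold cp
  have h : k + 1 + t = (k + t) + 1 := by ring
  simp only []
  rw [h]

lemma tw_rot : tw (fun k => f (k + t)) = tw f := by
  unfold tw
  rw [← Equiv.sum_comp (Equiv.addRight t) (fun k => dist (f k) (f (k+1)))]
  refine Finset.sum_congr rfl (fun k _ => ?_)
  have h : k + 1 + t = (k + t) + 1 := by ring
  simp only [Equiv.coe_addRight, h]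

lemma crossF_rot : crossF C (fun k => f (k + t)) = (crossF C f).image (fun k => k - t) := by
  ext k
  rw [mem_crossF_rot]
  constructor
  · intro h
    exact Finset.mem_image.mpr ⟨k + t, h, by ring⟩
  · intro h
    obtain ⟨x, hx, rfl⟩ := Finset.mem_image.mp h
    have : x - t + t = x := by ring
    rw [this]
    exact hx

lemma card_crossF_rot : (crossF C (fun k => f (k + t))).card = (crossF C f).card := by
  rw [crossF_rot, Finset.card_image_of_injective _ (sub_left_injective)]

lemma sig_rot (ψ : X → X) : sig C (fun k => f (k + t)) ψ = sig C f ψ := by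
  unfold sig
  refine Finset.sum_nbij' (fun k => k + t) (fun k => k - t) ?_ ?_ ?_ ?_ ?_
  · intro a ha; exact (mem_crossF_rot C f t a).mp ha
  · intro a ha
    rw [mem_crossF_rot]
    have h : a - t + t = a := by ring
    rw [h]; exact ha
  · intro a _; ring
  · intro a _; ring
  · intro a _; rw [cp_rot]

end Rot

/-- The general 2-opt move: kill two same-side crossings. -/
lemma twoOpt (C : Finset X) {n : ℕ} [NeZero n] (f : ZMod n → X) (i j : ZMod n)
    (hij : i ≠ j)
    (hci : i ∈ crossF C f) (hcj : j ∈ crossF C f)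
    (hQ : f i ∈ C ↔ f j ∈ C) :
    ∃ g : ZMod n → X, (∃ e : Equiv.Perm (ZMod n), g = f ∘ e) ∧
      tw g ≤ tw f + 2 * dist (cp C f i) (cp C f j) ∧
      (crossF C g).card + 2 = (crossF C f).card ∧
      (∀ ψ : X → X, sig C g ψ + dist (cp C f i) (ψ (cp C f i))
          + dist (cp C f j) (ψ (cp C f j)) ≤ sig C f ψ) ∧
      (∀ k ∈ crossF C g, ∃ k' ∈ crossF C f, cp C g k = cp C f k') := by
  classical
  set t : ZMod n := i + 1 with htdef
  set f1 : ZMod n → X := fun k => f (k + t) with hf1def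
  have hmt : (-1 : ZMod n) + t = i := by rw [htdef]; ring
  set j' : ZMod n := j - t with hj'def
  have hjt : j' + t = j := by rw [hj'def]; ring
  have hj'1 : j' + 1 + t = j + 1 := by rw [hj'def]; ring
  have hj'ne : j' ≠ -1 := by
    intro h
    apply hij
    have : j' + t = -1 + t := by rw [h]
    rw [hjt, hmt] at this
    exact this.symm
  have hf1m : f1 (-1) = f i := by rw [hf1def]; simp only []; rw [hmt]
  have hf10 : f1 0 = f (i + 1) := by rw [hf1def]; simp only []; rw [zero_add]
  have hf1j : f1 j' = f j := by rw [hf1def]; simp only []; rw [hjt]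
  have hf1j1 : f1 (j' + 1) = f (j + 1) := by rw [hf1def]; simp only []; rw [hj'1]
  have hc1' : Xor' (f1 (-1) ∈ C) (f1 0 ∈ C) := by
    rw [hf1m, hf10]; exact mem_crossF.mp hci
  have hcj' : Xor' (f1 j' ∈ C) (f1 (j' + 1) ∈ C) := by
    rw [hf1j, hf1j1]; exact mem_crossF.mp hcj
  have hQ' : f1 (-1) ∈ C ↔ f1 j' ∈ C := by rw [hf1m, hf1j]; exact hQ
  obtain ⟨e, hw, hcard, hsg, hcps⟩ := twoOpt_norm C f1 j' hj'ne hc1' hcj' hQ'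
  have hcpm : cp C f1 (-1) = cp C f i := by rw [hf1def, cp_rot, hmt]
  have hcpj : cp C f1 j' = cp C f j := by rw [hf1def, cp_rot, hjt]
  have hperm : f1 ∘ e = f ∘ (e.trans (Equiv.addRight t)) := by
    funext k
    simp [hf1def, Equiv.coe_addRight]
  refine ⟨f1 ∘ e, ⟨e.trans (Equiv.addRight t), hperm⟩, ?_, ?_, ?_, ?_⟩
  · rw [← tw_rot (f := f) (t := t), ← hcpm, ← hcpj, ← hf1def]
    exact hw
  · rw [← card_crossF_rot C f t, ← hf1def]
    exact hcard
  · intro ψ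
    rw [← hcpm, ← hcpj, ← sig_rot C f t ψ, ← hf1def]
    exact hsg ψ
  · intro k hk
    obtain ⟨k', hk', hcpk⟩ := hcps k hk
    refine ⟨k' + t, ?_, ?_⟩
    · rw [hf1def] at hk'
      exact (mem_crossF_rot C f t k').mp hk'
    · rw [hcpk, hf1def, cp_rot]

noncomputable def listSum : List (X × X) → ℝ
  | [] => 0
  | pq :: l => dist pq.1 pq.2 + listSum l

lemma listSum_nonneg (l : List (X × X)) : 0 ≤ listSum l := by
  induction l with
  | nil => simp [listSum]
  | cons pq l ih => simp only [listSum]; positivity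

def Chain : List (X × X) → Finset X → Prop
  | [], V => ∃ x, V = {x}
  | pq :: l, V => pq.1 ∈ V ∧ pq.2 ∈ V.erase pq.1 ∧ Chain l (V.erase pq.1)

lemma pigeon (C : Finset X) {n : ℕ} [NeZero n] (f : ZMod n → X)
    (h3 : 3 ≤ (crossF C f).card) :
    ∃ i ∈ crossF C f, ∃ j ∈ crossF C f, i ≠ j ∧ (f i ∈ C ↔ f j ∈ C) := by
  classical
  have hsplit := Finset.card_filter_add_card_filter_not
    (s := crossF C f) (p := fun i => f i ∈ C)
  rcases Nat.lt_or_ge 1 ((crossF C f).filter (fun i => f i ∈ C)).card with h | h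
  · obtain ⟨i, hi, j, hj, hij⟩ := Finset.one_lt_card.mp h
    obtain ⟨hi1, hi2⟩ := Finset.mem_filter.mp hi
    obtain ⟨hj1, hj2⟩ := Finset.mem_filter.mp hj
    exact ⟨i, hi1, j, hj1, hij, iff_of_true hi2 hj2⟩
  · have h2 : 1 < ((crossF C f).filter (fun i => ¬ f i ∈ C)).card := by omega
    obtain ⟨i, hi, j, hj, hij⟩ := Finset.one_lt_card.mp h2
    obtain ⟨hi1, hi2⟩ := Finset.mem_filter.mp hi
    obtain ⟨hj1, hj2⟩ := Finset.mem_filter.mp hj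
    exact ⟨i, hi1, j, hj1, hij, iff_of_false hi2 hj2⟩

/-- The main induction: given a contraction chain for the virtual vertex set,
we can patch the tour down to at most 2 crossings. -/
lemma LEM (C : Finset X) {n : ℕ} [NeZero n] (N : ℕ) :
    ∀ (l : List (X × X)) (V : Finset X) (f : ZMod n → X) (ψ : X → X),
      Chain l V →
      (∀ i ∈ crossF C f, ψ (cp C f i) ∈ V) →
      (crossF C f).card + (n+1) * l.length ≤ N →
      ∃ g : ZMod n → X, (∃ e : Equiv.Perm (ZMod n), g = f ∘ e) ∧
        (crossF C g).card ≤ 2 ∧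
        tw g ≤ tw f + 2 * sig C f ψ + 4 * listSum l := by
  classical
  induction N with
  | zero =>
    intro l V f ψ hch hψ hN
    refine ⟨f, ⟨Equiv.refl _, rfl⟩, by omega, ?_⟩
    have h1 := sig_nonneg C f ψ
    have h2 := listSum_nonneg l
    linarith
  | succ N ih =>
    intro l V f ψ hch hψ hN
    by_cases hle : (crossF C f).card ≤ 2
    · refine ⟨f, ⟨Equiv.refl _, rfl⟩, hle, ?_⟩
      have h1 := sig_nonneg C f ψ
      have h2 := listSum_nonneg l
      linarith
    · push_neg at hle
      by_cases hK : ∃ i ∈ crossF C f, ∃ j ∈ crossF C f,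
          i ≠ j ∧ (f i ∈ C ↔ f j ∈ C) ∧ ψ (cp C f i) = ψ (cp C f j)
      · -- kill two co-located same-side crossings
        obtain ⟨i, hi, j, hj, hij, hQ, hψeq⟩ := hK
        obtain ⟨g', ⟨e1, hg'⟩, hw, hcard, hsg, hcps⟩ := twoOpt C f i j hij hi hj hQ
        have hψ' : ∀ k ∈ crossF C g', ψ (cp C g' k) ∈ V := by
          intro k hk
          obtain ⟨k', hk', he⟩ := hcps k hk
          rw [he]; exact hψ k' hk'
        have hN' : (crossF C g').card + (n+1) * l.length ≤ N := by omega
        obtain ⟨g, ⟨e2, hg⟩, hgc, hgw⟩ := ih l V g' ψ hch hψ' hN'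
        refine ⟨g, ⟨e2.trans e1, ?_⟩, hgc, ?_⟩
        · rw [hg, hg']; rfl
        · have h1 := hsg ψ
          have hd : dist (cp C f i) (cp C f j) ≤
              dist (cp C f i) (ψ (cp C f i)) + dist (cp C f j) (ψ (cp C f j)) := by
            calc dist (cp C f i) (cp C f j)
                ≤ dist (cp C f i) (ψ (cp C f i)) + dist (ψ (cp C f i)) (cp C f j) :=
                  dist_triangle _ _ _
              _ = dist (cp C f i) (ψ (cp C f i)) + dist (cp C f j) (ψ (cp C f j)) := by
                  rw [hψeq, dist_comm (ψ (cp C f j)) (cp C f j)]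
          linarith
      · push_neg at hK
        match l, hch with
        | [], hch =>
          exfalso
          obtain ⟨x, hx⟩ := hch
          obtain ⟨i, hi, j, hj, hij, hQ⟩ := pigeon C f (by omega)
          have h1 : ψ (cp C f i) = x := by
            have := hψ i hi; rw [hx] at this; exact Finset.mem_singleton.mp this
          have h2 : ψ (cp C f j) = x := by
            have := hψ j hj; rw [hx] at this; exact Finset.mem_singleton.mp this
          exact hK i hi j hj hij hQ (h1.trans h2.symm)
        | (p, q) :: l', hch =>
          obtain ⟨hp, hq, hch'⟩ := hch
          set ψ' : X → X := fun x => if ψ x = p then q else ψ x with hψ'def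
          have hψ'mem : ∀ i ∈ crossF C f, ψ' (cp C f i) ∈ V.erase p := by
            intro i hi
            by_cases h : ψ (cp C f i) = p
            · simp only [hψ'def, if_pos h]; exact hq
            · simp only [hψ'def, if_neg h]
              exact Finset.mem_erase.mpr ⟨h, hψ i hi⟩
          have hN' : (crossF C f).card + (n+1) * l'.length ≤ N := by
            simp only [List.length_cons] at hN
            have : (n+1) * (l'.length + 1) = (n+1) * l'.length + (n+1) := by ring
            omega
          obtain ⟨g, hgp, hgc, hgw⟩ := ih l' (V.erase p) f ψ' hch' hψ'mem hN'
          refine ⟨g, hgp, hgc, ?_⟩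
          -- bound the sigma increase
          set bad := (crossF C f).filter (fun i => ψ (cp C f i) = p) with hbaddef
          have hbadE : ((crossF C f).filter
              (fun i => ψ (cp C f i) = p ∧ f i ∈ C)).card ≤ 1 := by
            refine Finset.card_le_one.mpr ?_
            intro a ha b hb
            obtain ⟨ha1, ha2, ha3⟩ := Finset.mem_filter.mp ha
            obtain ⟨hb1, hb2, hb3⟩ := Finset.mem_filter.mp hb
            by_contra hab
            exact hK a ha1 b hb1 hab (iff_of_true ha3 hb3) (ha2.trans hb2.symm)
          have hbadN : ((crossF C f).filter
              (fun i => ψ (cp C f i) = p ∧ ¬ f i ∈ C)).card ≤ 1 := by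
            refine Finset.card_le_one.mpr ?_
            intro a ha b hb
            obtain ⟨ha1, ha2, ha3⟩ := Finset.mem_filter.mp ha
            obtain ⟨hb1, hb2, hb3⟩ := Finset.mem_filter.mp hb
            by_contra hab
            exact hK a ha1 b hb1 hab (iff_of_false ha3 hb3) (ha2.trans hb2.symm)
          have hbad2 : bad.card ≤ 2 := by
            have hsplit := Finset.card_filter_add_card_filter_not
              (s := bad) (p := fun i => f i ∈ C)
            have e1 : bad.filter (fun i => f i ∈ C) =
                (crossF C f).filter (fun i => ψ (cp C f i) = p ∧ f i ∈ C) := by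
              rw [hbaddef, Finset.filter_filter]
            have e2 : bad.filter (fun i => ¬ f i ∈ C) =
                (crossF C f).filter (fun i => ψ (cp C f i) = p ∧ ¬ f i ∈ C) := by
              rw [hbaddef, Finset.filter_filter]
            rw [e1, e2] at hsplit
            omega
          have hsig : sig C f ψ' ≤ sig C f ψ + 2 * dist p q := by
            have hterm : ∀ i ∈ crossF C f,
                dist (cp C f i) (ψ' (cp C f i)) ≤
                dist (cp C f i) (ψ (cp C f i)) +
                  (if ψ (cp C f i) = p then dist p q else 0) := by
              intro i hi
              by_cases h : ψ (cp C f i) = p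
              · simp only [hψ'def, if_pos h]
                calc dist (cp C f i) q ≤ dist (cp C f i) p + dist p q := dist_triangle _ _ _
                  _ = dist (cp C f i) (ψ (cp C f i)) + dist p q := by rw [h]
              · simp only [hψ'def, if_neg h, add_zero]
                exact le_rfl
            calc sig C f ψ' ≤ ∑ i ∈ crossF C f, (dist (cp C f i) (ψ (cp C f i)) +
                (if ψ (cp C f i) = p then dist p q else 0)) := Finset.sum_le_sum hterm
              _ = sig C f ψ + ∑ i ∈ crossF C f,
                  (if ψ (cp C f i) = p then dist p q else 0) := by
                  rw [Finset.sum_add_distrib]; rfl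
              _ = sig C f ψ + bad.card * dist p q := by
                  have h2 : ∑ i ∈ crossF C f, (if ψ (cp C f i) = p then dist p q else 0)
                      = ∑ i ∈ bad, dist p q := (Finset.sum_filter _ _).symm
                  rw [h2, Finset.sum_const, nsmul_eq_mul]
              _ ≤ sig C f ψ + 2 * dist p q := by
                  have : (bad.card : ℝ) ≤ 2 := by exact_mod_cast hbad2
                  have hd := dist_nonneg (x := p) (y := q)
                  nlinarith
          have hls : listSum ((p, q) :: l') = dist p q + listSum l' := rfl
          rw [hls]
          linarith

noncomputable def ewt : Sym2 X → ℝ :=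
  Sym2.lift ⟨fun a b => dist a b, fun _ _ => dist_comm _ _⟩

lemma ewt_nonneg (e : Sym2 X) : 0 ≤ ewt e := by
  induction e using Sym2.ind with
  | _ a b => exact dist_nonneg

lemma reroute (E : Finset (Sym2 X)) (p q : X) (ep : Sym2 X) (hq : ep = s(p, q))
    (hpq : p ≠ q) (huniq : ∀ e ∈ E, p ∈ e → e = ep) :
    ∀ u v : X, Relation.ReflTransGen (fun a b => s(a, b) ∈ E) u v → v ≠ p →
      Relation.ReflTransGen (fun a b => s(a, b) ∈ E.erase ep) (if u = p then q else u) v := by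
  intro u v h hv
  induction h using Relation.ReflTransGen.head_induction_on with
  | refl => rw [if_neg hv]
  | head hab hbv ihb =>
    rename_i a c
    by_cases hap : a = p
    · subst hap
      have hce : s(a, c) = ep := huniq _ hab (Sym2.mem_mk_left _ _)
      rw [hq] at hce
      have hcq : c = q := by
        rcases Sym2.eq_iff.mp hce with ⟨_, h2⟩ | ⟨h1, _⟩
        · exact h2
        · exact absurd h1 hpq
      rw [if_pos rfl]
      subst hcq
      rw [if_neg (fun h => hpq h.symm)] at ihb
      exact ihb
    · by_cases hcp : c = p
      · subst hcp
        have hce : s(a, c) = ep := huniq _ hab (Sym2.mem_mk_right _ _)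
        rw [hq] at hce
        have haq : a = q := by
          rcases Sym2.eq_iff.mp hce with ⟨h1, _⟩ | ⟨h1, _⟩
          · exact absurd h1 hap
          · exact h1
        rw [if_pos rfl] at ihb
        rw [if_neg hap, haq]
        exact ihb
      · have hne : s(a, c) ≠ ep := by
          intro h
          rw [hq] at h
          rcases Sym2.eq_iff.mp h with ⟨h1, _⟩ | ⟨_, h2⟩
          · exact hap h1
          · exact hcp h2
        rw [if_neg hcp] at ihb
        rw [if_neg hap]
        exact Relation.ReflTransGen.head (Finset.mem_erase.mpr ⟨hne, hab⟩) ihb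

lemma span : ∀ (m : ℕ) (V : Finset X) (E : Finset (Sym2 X)),
    V.card ≤ m →
    V.Nonempty →
    (∀ e ∈ E, ¬ e.IsDiag) →
    (∀ e ∈ E, ∀ x ∈ e, x ∈ V) →
    (∀ u v : X, u ∈ V → v ∈ V → Relation.ReflTransGen (fun a b => s(a, b) ∈ E) u v) →
    E.card + 1 ≤ V.card →
    ∃ l : List (X × X), Chain l V ∧ listSum l ≤ ∑ e ∈ E, ewt e := by
  intro m
  induction m with
  | zero =>
    intro V E hVm hVne _ _ _ _
    exact absurd (Finset.card_pos.mpr hVne) (by omega)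
  | succ m ih =>
    intro V E hVm hVne hdiag hend hconn hcount
    rcases Nat.lt_or_ge V.card 2 with h2 | h2
    · have h1 : V.card = 1 := by have := Finset.card_pos.mpr hVne; omega
      obtain ⟨x, hx⟩ := Finset.card_eq_one.mp h1
      refine ⟨[], ⟨x, hx⟩, ?_⟩
      have : (0:ℝ) ≤ ∑ e ∈ E, ewt e := Finset.sum_nonneg (fun e _ => ewt_nonneg e)
      simpa [listSum] using this
    · -- handshake
      have hVe : ∀ e ∈ E, (V.filter (fun x => x ∈ e)).card = 2 := by
        intro e he
        induction e using Sym2.ind with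
        | _ a b =>
          have hab : a ≠ b := by
            intro h
            exact hdiag _ he (by rw [h]; exact Sym2.mk_isDiag_iff.mpr rfl)
          have haV : a ∈ V := hend _ he a (Sym2.mem_mk_left a b)
          have hbV : b ∈ V := hend _ he b (Sym2.mem_mk_right a b)
          have hfe : V.filter (fun x => x ∈ (s(a, b) : Sym2 X)) = {a, b} := by
            ext x
            simp only [Finset.mem_filter, Sym2.mem_iff, Finset.mem_insert,
              Finset.mem_singleton]
            constructor
            · rintro ⟨_, h⟩; exact h
            · rintro (rfl | rfl)
              · exact ⟨haV, Or.inl rfl⟩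
              · exact ⟨hbV, Or.inr rfl⟩
          rw [hfe, Finset.card_insert_of_notMem (by simp [hab]), Finset.card_singleton]
      have hhs : ∑ v ∈ V, (E.filter (fun e => v ∈ e)).card = 2 * E.card := by
        have h1 : ∀ v, (E.filter (fun e => v ∈ e)).card
            = ∑ e ∈ E, (if v ∈ e then 1 else 0) := by
          intro v; rw [Finset.card_filter]
        have h2 : ∀ e ∈ E, (∑ v ∈ V, if v ∈ e then 1 else 0) = 2 := by
          intro e he
          rw [← Finset.card_filter]
          exact hVe e he
        calc ∑ v ∈ V, (E.filter (fun e => v ∈ e)).card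
            = ∑ v ∈ V, ∑ e ∈ E, (if v ∈ e then 1 else 0) := by
              exact Finset.sum_congr rfl (fun v _ => h1 v)
          _ = ∑ e ∈ E, ∑ v ∈ V, (if v ∈ e then 1 else 0) := Finset.sum_comm
          _ = ∑ e ∈ E, 2 := Finset.sum_congr rfl h2
          _ = 2 * E.card := by rw [Finset.sum_const, smul_eq_mul, mul_comm]
      have hdeg1 : ∀ v ∈ V, 1 ≤ (E.filter (fun e => v ∈ e)).card := by
        intro v hv
        obtain ⟨u, hu, huv⟩ := Finset.exists_mem_ne (s := V) (by omega) v
        have hr := hconn v u hv hu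
        rcases Relation.ReflTransGen.cases_head hr with rfl | ⟨b, hb, _⟩
        · exact absurd rfl huv
        · exact Finset.card_pos.mpr
            ⟨s(v, b), Finset.mem_filter.mpr ⟨hb, Sym2.mem_mk_left _ _⟩⟩
      have hex : ∃ p ∈ V, (E.filter (fun e => p ∈ e)).card = 1 := by
        by_contra hno
        push_neg at hno
        have hall : ∀ v ∈ V, 2 ≤ (E.filter (fun e => v ∈ e)).card := by
          intro v hv
          have ha := hdeg1 v hv
          have hb := hno v hv
          omega
        have hsum : V.card * 2 ≤ ∑ v ∈ V, (E.filter (fun e => v ∈ e)).card := by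
          calc V.card * 2 = ∑ _v ∈ V, 2 := by rw [Finset.sum_const, smul_eq_mul]
            _ ≤ _ := Finset.sum_le_sum hall
        rw [hhs] at hsum
        omega
      obtain ⟨p, hpV, hp1⟩ := hex
      obtain ⟨ep, hep⟩ := Finset.card_eq_one.mp hp1
      have hepf : ep ∈ E.filter (fun e => p ∈ e) := by rw [hep]; exact Finset.mem_singleton_self ep
      have hepE : ep ∈ E := (Finset.mem_filter.mp hepf).1
      have hpep : p ∈ ep := (Finset.mem_filter.mp hepf).2
      obtain ⟨q, hq⟩ := Sym2.mem_iff_exists.mp hpep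
      have hpq : p ≠ q := by
        intro h
        exact hdiag ep hepE (by rw [hq, ← h]; exact Sym2.mk_isDiag_iff.mpr rfl)
      have hqV : q ∈ V := hend ep hepE q (by rw [hq]; exact Sym2.mem_mk_right p q)
      have huniq : ∀ e ∈ E, p ∈ e → e = ep := by
        intro e he hpe
        have : e ∈ E.filter (fun e => p ∈ e) := Finset.mem_filter.mpr ⟨he, hpe⟩
        rw [hep] at this
        exact Finset.mem_singleton.mp this
      have hE'p : ∀ e ∈ E.erase ep, p ∉ e := by
        intro e he hpe
        obtain ⟨hne, heE⟩ := Finset.mem_erase.mp he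
        exact hne (huniq e heE hpe)
      -- recursive call
      have hVm' : (V.erase p).card ≤ m := by
        rw [Finset.card_erase_of_mem hpV]; omega
      have hVne' : (V.erase p).Nonempty :=
        ⟨q, Finset.mem_erase.mpr ⟨fun h => hpq h.symm, hqV⟩⟩
      have hdiag' : ∀ e ∈ E.erase ep, ¬ e.IsDiag :=
        fun e he => hdiag e (Finset.mem_erase.mp he).2
      have hend' : ∀ e ∈ E.erase ep, ∀ x ∈ e, x ∈ V.erase p := by
        intro e he x hx
        refine Finset.mem_erase.mpr ⟨?_, hend e (Finset.mem_erase.mp he).2 x hx⟩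
        intro hxp
        exact hE'p e he (hxp ▸ hx)
      have hconn' : ∀ u v : X, u ∈ V.erase p → v ∈ V.erase p →
          Relation.ReflTransGen (fun a b => s(a, b) ∈ E.erase ep) u v := by
        intro u v hu hv
        obtain ⟨hup, huV⟩ := Finset.mem_erase.mp hu
        obtain ⟨hvp, hvV⟩ := Finset.mem_erase.mp hv
        have h := reroute E p q ep hq hpq huniq u v (hconn u v huV hvV) hvp
        rwa [if_neg hup] at h
      have hcount' : (E.erase ep).card + 1 ≤ (V.erase p).card := by
        rw [Finset.card_erase_of_mem hepE, Finset.card_erase_of_mem hpV]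
        have : 1 ≤ E.card := Finset.card_pos.mpr ⟨ep, hepE⟩
        omega
      obtain ⟨l', hch', hsum'⟩ := ih (V.erase p) (E.erase ep) hVm' hVne' hdiag' hend' hconn' hcount'
      refine ⟨(p, q) :: l', ⟨hpV, Finset.mem_erase.mpr ⟨fun h => hpq h.symm, hqV⟩, hch'⟩, ?_⟩
      have hewt : ewt ep = dist p q := by rw [hq]; rfl
      have hsplit := Finset.sum_erase_add E ewt hepE
      have : listSum ((p, q) :: l') = dist p q + listSum l' := rfl
      rw [this, ← hsplit, ← hewt]
      linarith

section SpanningTree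

lemma exists_tree (W : Type*) [Finite W] :
    ∀ (m : ℕ) (G : SimpleGraph W), G.edgeSet.ncard ≤ m → G.Connected →
      ∃ T : SimpleGraph W, T.Connected ∧ T.IsAcyclic := by
  intro m
  induction m with
  | zero =>
    intro G hm hc
    refine ⟨G, hc, ?_⟩
    intro v c hcyc
    have h3 := hcyc.three_le_length
    have hfin : G.edgeSet.Finite := Set.toFinite _
    have hempty : G.edgeSet = ∅ := Set.ncard_eq_zero hfin |>.mp (by omega)
    cases c with
    | nil => simp at h3
    | cons hadj p =>
      have : s(v, _) ∈ G.edgeSet := G.mem_edgeSet.mpr hadj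
      rw [hempty] at this
      exact absurd this (Set.notMem_empty _)
  | succ m ih =>
    intro G hm hc
    by_cases ha : G.IsAcyclic
    · exact ⟨G, hc, ha⟩
    · rw [SimpleGraph.isAcyclic_iff_forall_adj_isBridge] at ha
      push_neg at ha
      obtain ⟨v, w, hadj, hnb⟩ := ha
      set G' := G \ SimpleGraph.fromEdgeSet {s(v, w)} with hG'def
      have hreach : G'.Reachable v w := by
        rw [SimpleGraph.isBridge_iff] at hnb
        push_neg at hnb
        exact hnb
      have hG'adj : ∀ a b : W, G'.Adj a b ↔ (G.Adj a b ∧ s(a, b) ≠ s(v, w)) := by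
        intro a b
        rw [hG'def]
        simp only [SimpleGraph.sdiff_adj, SimpleGraph.fromEdgeSet_adj, Set.mem_singleton_iff]
        constructor
        · rintro ⟨h1, h2⟩
          refine ⟨h1, fun hh => h2 ⟨hh, h1.ne⟩⟩
        · rintro ⟨h1, h2⟩
          exact ⟨h1, fun hh => h2 hh.1⟩
      have hstep : ∀ a b : W, G.Adj a b → G'.Reachable a b := by
        intro a b hab
        by_cases h : s(a, b) = s(v, w)
        · rcases Sym2.eq_iff.mp h with ⟨rfl, rfl⟩ | ⟨rfl, rfl⟩
          · exact hreach
          · exact hreach.symm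
        · exact SimpleGraph.Adj.reachable ((hG'adj a b).mpr ⟨hab, h⟩)
      have hlift : ∀ a b : W, G.Reachable a b → G'.Reachable a b := by
        intro a b hr
        obtain ⟨p⟩ := hr
        induction p with
        | nil => exact SimpleGraph.Reachable.refl _
        | cons hadj' p' ih' => exact (hstep _ _ hadj').trans ih'
      have hconn' : G'.Connected := by
        haveI := hc.nonempty
        exact SimpleGraph.Connected.mk (fun a b => hlift a b (hc.preconnected a b))
      have hcard' : G'.edgeSet.ncard ≤ m := by
        have hmem : s(v, w) ∈ G.edgeSet := G.mem_edgeSet.mpr hadj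
        have hsub : G'.edgeSet = G.edgeSet \ {s(v, w)} := by
          ext e
          induction e using Sym2.ind with
          | _ a b =>
            simp only [SimpleGraph.mem_edgeSet, hG'adj, Set.mem_diff,
              Set.mem_singleton_iff]
        rw [hsub]
        have := Set.ncard_diff_singleton_lt_of_mem hmem (Set.toFinite _)
        omega
      exact ih G' hcard' hconn'

end SpanningTree

section Translate

lemma lift_map_val (P : Finset X) (e : Sym2 {x // x ∈ P}) :
    ewt (Sym2.map (Subtype.val) e) =
      Sym2.lift ⟨fun (a b : {x // x ∈ P}) => dist (a : X) (b : X), fun _ _ => dist_comm _ _⟩ e := by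
  induction e using Sym2.ind with
  | _ a b => rfl

lemma tree_to_chain (P : Finset X) (hP : P.Nonempty) (G : SimpleGraph {x // x ∈ P})
    (hc : G.Connected) (ha : G.IsAcyclic) :
    ∃ l : List (X × X), Chain l P ∧ listSum l ≤ graphWeight P G := by
  classical
  set E0 : Finset (Sym2 X) := (G.edgeSet.toFinite.toFinset).image (Sym2.map Subtype.val)
    with hE0
  have hinj : Function.Injective (Sym2.map (Subtype.val : {x // x ∈ P} → X)) :=
    Sym2.map.injective Subtype.val_injective
  -- no diagonal edges
  have hdiag : ∀ e ∈ E0, ¬ e.IsDiag := by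
    intro e he hd
    obtain ⟨e', he', rfl⟩ := Finset.mem_image.mp he
    rw [Sym2.isDiag_map Subtype.val_injective] at hd
    have he'' : e' ∈ G.edgeSet := (Set.Finite.mem_toFinset _).mp he'
    exact G.not_isDiag_of_mem_edgeSet he'' hd
  -- endpoints in P
  have hend : ∀ e ∈ E0, ∀ x ∈ e, x ∈ P := by
    intro e he x hx
    obtain ⟨e', _, rfl⟩ := Finset.mem_image.mp he
    obtain ⟨a, _, rfl⟩ := Sym2.mem_map.mp hx
    exact a.2
  -- connectivity
  have hwalk : ∀ (a b : {x // x ∈ P}) (_p : G.Walk a b),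
      Relation.ReflTransGen (fun a b => s(a, b) ∈ E0) a.val b.val := by
    intro a b p
    induction p with
    | nil => exact Relation.ReflTransGen.refl
    | @cons a' b' c' hadj p' ih =>
      refine Relation.ReflTransGen.head ?_ ih
      refine Finset.mem_image.mpr ⟨s(a', b'), ?_, rfl⟩
      exact (Set.Finite.mem_toFinset _).mpr (G.mem_edgeSet.mpr hadj)
  have hconn : ∀ u v : X, u ∈ P → v ∈ P →
      Relation.ReflTransGen (fun a b => s(a, b) ∈ E0) u v := by
    intro u v hu hv
    obtain ⟨p⟩ := hc.preconnected ⟨u, hu⟩ ⟨v, hv⟩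
    exact hwalk _ _ p
  -- edge count
  have hcount : E0.card + 1 ≤ P.card := by
    haveI : Fintype {x // x ∈ P} := FinsetCoe.fintype P
    haveI := Classical.decRel G.Adj
    have htree : G.IsTree := ⟨hc, ha⟩
    have hedge := htree.card_edgeFinset
    have h1 : E0.card = G.edgeFinset.card := by
      rw [hE0, Finset.card_image_of_injective _ hinj]
      congr 1
      apply Finset.coe_injective
      rw [Set.Finite.coe_toFinset, SimpleGraph.coe_edgeFinset]
    rw [h1, ]
    rw [Fintype.card_coe] at hedge
    omega
  -- weight
  have hw : ∑ e ∈ E0, ewt e = graphWeight P G := by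
    rw [hE0, Finset.sum_image (fun a _ b _ h => hinj h)]
    unfold graphWeight
    exact Finset.sum_congr rfl (fun e _ => lift_map_val P e)
  obtain ⟨l, hch, hsum⟩ := span P.card P E0 le_rfl hP hdiag hend hconn hcount
  exact ⟨l, hch, by rw [← hw]; exact hsum⟩

end Translate

section Assemble

lemma graphWeight_nonneg (P : Finset X) (T : SimpleGraph {x // x ∈ P}) :
    0 ≤ graphWeight P T := by
  refine Finset.sum_nonneg (fun e _ => ?_)
  induction e using Sym2.ind with
  | _ a b => exact dist_nonneg

lemma mstWeight_nonneg (P : Finset X) : 0 ≤ mstWeight P := by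
  refine Real.sInf_nonneg ?_
  rintro w ⟨T, _, _, rfl⟩
  exact graphWeight_nonneg P T

lemma mstWeight_attained (P : Finset X) (hP : P.Nonempty) :
    ∃ T : SimpleGraph {x // x ∈ P}, T.Connected ∧ T.IsAcyclic ∧
      graphWeight P T = mstWeight P := by
  classical
  haveI : Fintype {x // x ∈ P} := FinsetCoe.fintype P
  haveI : Finite (SimpleGraph {x // x ∈ P}) := by
    refine Finite.of_injective (fun G => G.Adj) ?_
    intro G H h
    ext a b
    simp only [] at h
    rw [h]
  haveI : Nonempty {x // x ∈ P} := ⟨⟨hP.choose, hP.choose_spec⟩⟩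
  set WS := {w : ℝ | ∃ T : SimpleGraph {x // x ∈ P},
    T.Connected ∧ T.IsAcyclic ∧ w = graphWeight P T} with hWS
  have hne : WS.Nonempty := by
    have htop : (⊤ : SimpleGraph {x // x ∈ P}).Connected := by
      refine SimpleGraph.Connected.mk ?_
      intro a b
      by_cases h : a = b
      · rw [h]
      · exact SimpleGraph.Adj.reachable h
    obtain ⟨T, hc, ha⟩ := exists_tree {x // x ∈ P}
      ((⊤ : SimpleGraph {x // x ∈ P}).edgeSet.ncard) ⊤ le_rfl htop
    exact ⟨graphWeight P T, T, hc, ha, rfl⟩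
  have hfin : WS.Finite := by
    have hsub : WS ⊆ Set.range (graphWeight P) := by
      rintro w ⟨T, _, _, rfl⟩
      exact ⟨T, rfl⟩
    exact (Set.finite_range _).subset hsub
  have hmem := hne.csInf_mem hfin
  obtain ⟨T, hc, ha, hw⟩ := hmem
  exact ⟨T, hc, ha, hw.symm⟩

lemma ncard_eq (C : Finset X) {n : ℕ} [NeZero n] (f : ZMod n → X) :
    {i : ZMod n | Xor' (f i ∈ C) (f (i + 1) ∈ C)}.ncard = (crossF C f).card := by
  classical
  rw [← Set.ncard_coe_finset]
  congr 1
  ext i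
  simp [mem_crossF]

lemma isTour_comp (S : Finset X) {n : ℕ} (f : ZMod n → X) (e : Equiv.Perm (ZMod n))
    (hf : IsTour S f) : IsTour S (f ∘ e) := by
  refine ⟨hf.1.comp e.injective, fun x => (hf.2 x).trans ?_⟩
  constructor
  · rintro ⟨i, hi⟩
    exact ⟨e.symm i, by simp [hi]⟩
  · rintro ⟨i, hi⟩
    exact ⟨e i, hi⟩

end Assemble

end Patch

/-- **Patching Lemma.** Let `T` be a tour of `S` (given as `f : ZMod n → X` with `n = |S|`),
let `C ⊆ S`, and let `P` be the set of crossing points of `T` w.r.t. `C` (endpoints in `C`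
of the edges of `T` having exactly one endpoint in `C`). Then there is a tour `T'` of `S`
crossing `C` at most twice with `w(T') ≤ w(T) + 4 * w(MST(P))`. -/
theorem patching_lemma {X : Type*} [MetricSpace X] (S C : Finset X) (hCS : C ⊆ S)
    (n : ℕ) [NeZero n] (hn : n = S.card) (f : ZMod n → X) (hf : IsTour S f)
    (r : ℕ) (hr : {i : ZMod n | Xor' (f i ∈ C) (f (i + 1) ∈ C)}.ncard = r)
    (P : Finset X)
    (hP : ∀ x : X, x ∈ P ↔ x ∈ C ∧
      ∃ i : ZMod n, Xor' (f i ∈ C) (f (i + 1) ∈ C) ∧ (f i = x ∨ f (i + 1) = x)) :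
    ∃ f' : ZMod n → X, IsTour S f' ∧
      {i : ZMod n | Xor' (f' i ∈ C) (f' (i + 1) ∈ C)}.ncard ≤ 2 ∧
      tourWeight f' ≤ tourWeight f + 4 * mstWeight P := by
  classical
  have hcpP : ∀ i ∈ Patch.crossF C f, Patch.cp C f i ∈ P := by
    intro i hi
    obtain ⟨h1, h2⟩ := Patch.cp_mem_of_cross hi
    exact (hP _).mpr ⟨h1, i, Patch.mem_crossF.mp hi, h2⟩
  rcases le_or_gt ((Patch.crossF C f).card) 2 with hle | hlt
  · refine ⟨f, hf, ?_, ?_⟩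
    · rw [Patch.ncard_eq]; exact hle
    · have := Patch.mstWeight_nonneg P
      linarith
  · -- nonempty crossing set, so P is nonempty
    have hPne : P.Nonempty := by
      have hpos : 0 < (Patch.crossF C f).card := by omega
      obtain ⟨i, hi⟩ := Finset.card_pos.mp hpos
      exact ⟨Patch.cp C f i, hcpP i hi⟩
    obtain ⟨T, hc, ha, hTw⟩ := Patch.mstWeight_attained P hPne
    obtain ⟨l, hch, hls⟩ := Patch.tree_to_chain P hPne T hc ha
    obtain ⟨g, ⟨e, hg⟩, hgc, hgw⟩ := Patch.LEM C ((Patch.crossF C f).card + (n+1) * l.length)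
      l P f id hch (fun i hi => hcpP i hi) le_rfl
    refine ⟨g, ?_, ?_, ?_⟩
    · rw [hg]; exact Patch.isTour_comp S f e hf
    · rw [Patch.ncard_eq]; exact hgc
    · have hsig0 : Patch.sig C f id = 0 :=
        Finset.sum_eq_zero (fun i _ => by simp)
      rw [hsig0] at hgw
      have h1 : Patch.listSum l ≤ mstWeight P := by rw [← hTw]; exact hls
      have h2 : tourWeight g = Patch.tw g := rfl
      have h3 : tourWeight f = Patch.tw f := rfl
      rw [h2, h3]
      linarith
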